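/- Let Λ > 0, c = √(2Λ), λ = √(Λ/18), and on the domain 0 < x < π/c define a(t,x) = e^{λ t} (sin(c x))^{1/6}, b(t,x) = e^{−λ t} (sin(c x))^{1/6}, φ(x) = √(5/6) ln(tan(c x / 2)). Set L1 = (∂_t a)/a, L2 = (∂_t b)/b, L3 = (∂_x a)/a, L4 = (∂_x b)/b. Then L1² + 3 L1 L2 + L2² − (1/6)(∂_t φ)² − [L3² + 3 L3 L4 + L4² − (1/6)(∂_x φ)²] = (2/9) Λ. -/

import Mathlib

open Real

/-- The Einstein constraint equation ("first integral") for the Class `E₀`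
solution: with `c = √(2Λ)`, `λ = √(Λ/18)`, `a = e^{λt}(sin cx)^{1/6}`,
`b = e^{−λt}(sin cx)^{1/6}`, `φ = √(5/6) ln tan(cx/2)`, and logarithmic
derivatives `L1 = ∂_t a/a`, `L2 = ∂_t b/b`, `L3 = ∂_x a/a`, `L4 = ∂_x b/b`,
one has `L1² + 3L1L2 + L2² − (1/6)(∂_t φ)² − [L3² + 3L3L4 + L4² − (1/6)(∂_x φ)²]
= (2/9)Λ` on `0 < x < π/c`. -/
theorem classE0_constraint_equation
    (Λ : ℝ) (hΛ : 0 < Λ) (c lam : ℝ)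
    (hc : c = Real.sqrt (2 * Λ)) (hlam : lam = Real.sqrt (Λ / 18))
    (a b : ℝ → ℝ → ℝ) (φ : ℝ → ℝ)
    (ha : ∀ t x, a t x = Real.exp (lam * t) * Real.sin (c * x) ^ ((1:ℝ)/6))
    (hb : ∀ t x, b t x = Real.exp (-(lam * t)) * Real.sin (c * x) ^ ((1:ℝ)/6))
    (hφ : ∀ x, φ x = Real.sqrt (5/6) * Real.log (Real.tan (c * x / 2)))
    (t x : ℝ) (hx0 : 0 < x) (hxπ : x < π / c)
    (L1 L2 L3 L4 : ℝ)
    (hL1 : L1 = deriv (fun s => a s x) t / a t x)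
    (hL2 : L2 = deriv (fun s => b s x) t / b t x)
    (hL3 : L3 = deriv (fun y => a t y) x / a t x)
    (hL4 : L4 = deriv (fun y => b t y) x / b t x) :
    L1 ^ 2 + 3 * L1 * L2 + L2 ^ 2 - (1/6) * (deriv (fun _ : ℝ => φ x) t) ^ 2
      - (L3 ^ 2 + 3 * L3 * L4 + L4 ^ 2 - (1/6) * (deriv φ x) ^ 2)
    = (2/9) * Λ := by
  have hc0 : 0 < c := by rw [hc]; exact Real.sqrt_pos.mpr (by linarith)
  have hcx0 : 0 < c * x := by positivity
  have hcxπ : c * x < π := by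
    have := (lt_div_iff₀' hc0).mp hxπ
    linarith
  have hS : 0 < Real.sin (c * x) := Real.sin_pos_of_pos_of_lt_pi hcx0 hcxπ
  set S := Real.sin (c * x) with hSdef
  set C := Real.cos (c * x) with hCdef
  have hSp : (0:ℝ) < S ^ ((1:ℝ)/6) := Real.rpow_pos_of_pos hS _
  -- time derivatives
  have hda : HasDerivAt (fun s => a s x) (lam * Real.exp (lam * t) * S ^ ((1:ℝ)/6)) t := by
    have h1 : HasDerivAt (fun s : ℝ => Real.exp (lam * s)) (Real.exp (lam * t) * lam) t := by
      simpa using ((hasDerivAt_id t).const_mul lam).exp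
    have := h1.mul_const (S ^ ((1:ℝ)/6))
    have heq : (fun s => a s x) = fun s => Real.exp (lam * s) * S ^ ((1:ℝ)/6) := by
      funext s; rw [ha]
    rw [heq]; exact this.congr_deriv (by ring)
  have hdb : HasDerivAt (fun s => b s x) (-lam * Real.exp (-(lam * t)) * S ^ ((1:ℝ)/6)) t := by
    have h1 : HasDerivAt (fun s : ℝ => Real.exp (-(lam * s))) (Real.exp (-(lam * t)) * (-lam)) t := by
      simpa using ((hasDerivAt_id t).const_mul (-lam)).exp
    have := h1.mul_const (S ^ ((1:ℝ)/6))
    have heq : (fun s => b s x) = fun s => Real.exp (-(lam * s)) * S ^ ((1:ℝ)/6) := by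
      funext s; rw [hb]
    rw [heq]; exact this.congr_deriv (by ring)
  have hv1 : L1 = lam := by
    rw [hL1, hda.deriv, ha]
    field_simp
    rw [← hSdef, mul_div_cancel_right₀ _ hSp.ne']
  have hv2 : L2 = -lam := by
    rw [hL2, hdb.deriv, hb]
    field_simp
    rw [← hSdef, mul_div_cancel_right₀ _ hSp.ne']
  -- spatial derivative of sin(c y)^(1/6)
  have hsin : HasDerivAt (fun y => Real.sin (c * y)) (C * c) x := by
    simpa [hCdef] using ((hasDerivAt_id x).const_mul c).sin
  have hrpow : HasDerivAt (fun y => Real.sin (c * y) ^ ((1:ℝ)/6))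
      (C * c * (1/6) * S ^ ((1:ℝ)/6 - 1)) x :=
    hsin.rpow_const (Or.inl hS.ne')
  have hsub : S ^ ((1:ℝ)/6 - 1) = S ^ ((1:ℝ)/6) / S := by
    rw [Real.rpow_sub hS, Real.rpow_one]
  have hda2 : HasDerivAt (fun y => a t y)
      (Real.exp (lam * t) * (C * c * (1/6) * S ^ ((1:ℝ)/6 - 1))) x := by
    have heq : (fun y => a t y) = fun y => Real.exp (lam * t) * Real.sin (c * y) ^ ((1:ℝ)/6) := by
      funext y; rw [ha]
    rw [heq]; exact hrpow.const_mul _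
  have hdb2 : HasDerivAt (fun y => b t y)
      (Real.exp (-(lam * t)) * (C * c * (1/6) * S ^ ((1:ℝ)/6 - 1))) x := by
    have heq : (fun y => b t y) = fun y => Real.exp (-(lam * t)) * Real.sin (c * y) ^ ((1:ℝ)/6) := by
      funext y; rw [hb]
    rw [heq]; exact hrpow.const_mul _
  have hv3 : L3 = c / 6 * (C / S) := by
    rw [hL3, hda2.deriv, ha, hsub]
    field_simp
    rw [← hSdef, mul_div_cancel_right₀ _ hSp.ne']
  have hv4 : L4 = c / 6 * (C / S) := by
    rw [hL4, hdb2.deriv, hb, hsub]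
    field_simp
    rw [← hSdef, mul_div_cancel_right₀ _ hSp.ne']
  -- deriv of φ
  have hu0 : 0 < c * x / 2 := by positivity
  have huπ : c * x / 2 < π / 2 := by linarith
  have hcosu : 0 < Real.cos (c * x / 2) :=
    Real.cos_pos_of_mem_Ioo ⟨by linarith [Real.pi_pos], huπ⟩
  have hsinu : 0 < Real.sin (c * x / 2) := Real.sin_pos_of_pos_of_lt_pi hu0 (by linarith [Real.pi_pos])
  have htanpos : 0 < Real.tan (c * x / 2) := by
    rw [Real.tan_eq_sin_div_cos]; positivity
  have hinner : HasDerivAt (fun y : ℝ => c * y / 2) (c / 2) x := by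
    simpa using ((hasDerivAt_id x).const_mul c).div_const 2
  have htan : HasDerivAt (fun y : ℝ => Real.tan (c * y / 2))
      (1 / Real.cos (c * x / 2) ^ 2 * (c / 2)) x :=
    by have := (Real.hasDerivAt_tan hcosu.ne').comp x hinner; exact this
  have hlog := (htan.log htanpos.ne').const_mul (Real.sqrt (5/6))
  have hφeq : φ = fun y => Real.sqrt (5/6) * Real.log (Real.tan (c * y / 2)) := funext hφ
  have hS2 : S = 2 * Real.sin (c * x / 2) * Real.cos (c * x / 2) := by
    have h2 : (2:ℝ) * (c * x / 2) = c * x := by ring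
    calc S = Real.sin (2 * (c * x / 2)) := by rw [h2]
    _ = 2 * Real.sin (c * x / 2) * Real.cos (c * x / 2) := Real.sin_two_mul _
  have hv5 : deriv φ x = Real.sqrt (5/6) * c / S := by
    rw [hφeq, hlog.deriv, Real.tan_eq_sin_div_cos, hS2]
    field_simp
  have hv0 : deriv (fun _ : ℝ => φ x) t = 0 := deriv_const _ _
  -- final algebra
  have hlam2 : lam ^ 2 = Λ / 18 := by rw [hlam, sq_sqrt (by linarith)]
  have hc2 : c ^ 2 = 2 * Λ := by rw [hc, sq_sqrt (by linarith)]
  have hk2 : Real.sqrt (5/6) ^ 2 = 5/6 := sq_sqrt (by norm_num)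
  have hpyth : C ^ 2 = 1 - S ^ 2 := by
    have := Real.sin_sq_add_cos_sq (c * x)
    rw [← hSdef, ← hCdef] at this; linarith
  have hsq : (Real.sqrt (5/6) * c / S) ^ 2 = 5/6 * c ^ 2 / S ^ 2 := by
    rw [div_pow, mul_pow, hk2]
  rw [hv0, hv1, hv2, hv3, hv4, hv5, hsq]
  field_simp
  linear_combination (-324*S^2) * hlam2 + (45*S^2) * hc2 + (-45*c^2) * hpyth
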